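/- Let C be a finite tensor category and A an algebra in C. Then (i) for all M, N ∈ C_A, the internal Hom of the left C-module category C_A is uhom_{C_A}(M, N) = (M ⊗_A *N)*, and (ii) for all M, N ∈ C_A, the internal Hom of the opposite (right) module category is uhom_{(C_A)^op}(M, N) = *(N ⊗_A *M). -/

import Mathlib

/-!
Common framework: left/right module categories over a tensor category,
module functors, module natural transformations, pre-balancings and
module (co)ends, internal Homs, following Bortolussi–Mombelli,
"(co)ends for representations of tensor categories".

Throughout, a *finite tensor category* is modelled as an abelian,
`k`-linear, monoidally preadditive/linear rigid monoidal category with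
simple unit object (finiteness of the underlying abelian category is not
used in the statements below and is omitted).
-/

open CategoryTheory Category MonoidalCategory Opposite

universe w w₁ w₂ v u v₁ u₁ v₂ u₂ v₃ u₃ v₄ u₄

namespace TensorModuleEnd

variable (C : Type u) [Category.{v} C] [MonoidalCategory C]

/-- A left module category structure of a monoidal category `C` on a category `M`.
The action bifunctor is encoded as a functor `act : C ⥤ M ⥤ M`, with
`X ▷ m = (act.obj X).obj m`, together with coherent associativity and
unit isomorphisms (equations (1), (2) of the paper). -/
structure LeftModuleStr (M : Type u₁) [Category.{v₁} M] where
  act : C ⥤ M ⥤ M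
  assoc : ∀ (X Y : C) (m : M),
    (act.obj (X ⊗ Y)).obj m ≅ (act.obj X).obj ((act.obj Y).obj m)
  unitIso : ∀ (m : M), (act.obj (𝟙_ C)).obj m ≅ m
  assoc_natural_left : ∀ {X X' : C} (f : X ⟶ X') (Y : C) (m : M),
    (act.map (f ▷ Y)).app m ≫ (assoc X' Y m).hom =
      (assoc X Y m).hom ≫ (act.map f).app ((act.obj Y).obj m)
  assoc_natural_mid : ∀ (X : C) {Y Y' : C} (g : Y ⟶ Y') (m : M),
    (act.map (X ◁ g)).app m ≫ (assoc X Y' m).hom =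
      (assoc X Y m).hom ≫ (act.obj X).map ((act.map g).app m)
  assoc_natural_obj : ∀ (X Y : C) {m m' : M} (h : m ⟶ m'),
    (act.obj (X ⊗ Y)).map h ≫ (assoc X Y m').hom =
      (assoc X Y m).hom ≫ (act.obj X).map ((act.obj Y).map h)
  unit_natural : ∀ {m m' : M} (h : m ⟶ m'),
    (act.obj (𝟙_ C)).map h ≫ (unitIso m').hom = (unitIso m).hom ≫ h
  pentagon : ∀ (X Y Z : C) (m : M),
    (assoc (X ⊗ Y) Z m).hom ≫ (assoc X Y ((act.obj Z).obj m)).hom =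
      (act.map (α_ X Y Z).hom).app m ≫ (assoc X (Y ⊗ Z) m).hom ≫
        (act.obj X).map ((assoc Y Z m).hom)
  triangle : ∀ (X : C) (m : M),
    (assoc X (𝟙_ C) m).hom ≫ (act.obj X).map ((unitIso m).hom) =
      (act.map (ρ_ X).hom).app m

/-- A right module category structure of `C` on `M`; here `(act.obj X).obj m`
plays the role of `m ◁ X` (equations (11), (12) of the paper). -/
structure RightModuleStr (M : Type u₁) [Category.{v₁} M] where
  act : C ⥤ M ⥤ M
  assoc : ∀ (X Y : C) (m : M),
    (act.obj (X ⊗ Y)).obj m ≅ (act.obj Y).obj ((act.obj X).obj m)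
  unitIso : ∀ (m : M), (act.obj (𝟙_ C)).obj m ≅ m
  assoc_natural_left : ∀ {X X' : C} (f : X ⟶ X') (Y : C) (m : M),
    (act.map (f ▷ Y)).app m ≫ (assoc X' Y m).hom =
      (assoc X Y m).hom ≫ (act.obj Y).map ((act.map f).app m)
  assoc_natural_mid : ∀ (X : C) {Y Y' : C} (g : Y ⟶ Y') (m : M),
    (act.map (X ◁ g)).app m ≫ (assoc X Y' m).hom =
      (assoc X Y m).hom ≫ (act.map g).app ((act.obj X).obj m)
  assoc_natural_obj : ∀ (X Y : C) {m m' : M} (h : m ⟶ m'),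
    (act.obj (X ⊗ Y)).map h ≫ (assoc X Y m').hom =
      (assoc X Y m).hom ≫ (act.obj Y).map ((act.obj X).map h)
  unit_natural : ∀ {m m' : M} (h : m ⟶ m'),
    (act.obj (𝟙_ C)).map h ≫ (unitIso m').hom = (unitIso m).hom ≫ h
  pentagon : ∀ (X Y Z : C) (m : M),
    (act.map (α_ X Y Z).hom).app m ≫ (assoc X (Y ⊗ Z) m).hom ≫
        (assoc Y Z ((act.obj X).obj m)).hom =
      (assoc (X ⊗ Y) Z m).hom ≫ (act.obj Z).map ((assoc X Y m).hom)
  triangle : ∀ (X : C) (m : M),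
    (assoc (𝟙_ C) X m).hom ≫ (act.obj X).map ((unitIso m).hom) =
      (act.map (λ_ X).hom).app m

variable {C}

/-- A left module category `M` over `C` is *exact* if `P ▷ m` is projective in `M`
for every projective `P : C` and every `m : M`. -/
def LeftModuleStr.IsExact {M : Type u₁} [Category.{v₁} M] (ρ : LeftModuleStr C M) : Prop :=
  ∀ (P : C), Projective P → ∀ m : M, Projective ((ρ.act.obj P).obj m)

/-- A `C`-module functor `(F, c)` between left `C`-module categories
(equations (3), (4) of the paper). -/
structure ModuleFunctor {M : Type u₁} [Category.{v₁} M] {N : Type u₂} [Category.{v₂} N]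
    (ρ : LeftModuleStr C M) (σ : LeftModuleStr C N) where
  F : M ⥤ N
  str : ∀ (X : C) (m : M), F.obj ((ρ.act.obj X).obj m) ≅ (σ.act.obj X).obj (F.obj m)
  str_natural_obj : ∀ (X : C) {m m' : M} (h : m ⟶ m'),
    F.map ((ρ.act.obj X).map h) ≫ (str X m').hom =
      (str X m).hom ≫ (σ.act.obj X).map (F.map h)
  str_natural_tensor : ∀ {X X' : C} (f : X ⟶ X') (m : M),
    F.map ((ρ.act.map f).app m) ≫ (str X' m).hom =
      (str X m).hom ≫ (σ.act.map f).app (F.obj m)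
  pentagon : ∀ (X Y : C) (m : M),
    F.map ((ρ.assoc X Y m).hom) ≫ (str X ((ρ.act.obj Y).obj m)).hom ≫
        (σ.act.obj X).map ((str Y m).hom) =
      (str (X ⊗ Y) m).hom ≫ (σ.assoc X Y (F.obj m)).hom
  unit : ∀ (m : M),
    (str (𝟙_ C) m).hom ≫ (σ.unitIso (F.obj m)).hom = F.map ((ρ.unitIso m).hom)

/-- A module natural transformation between module functors (equation (5)). -/
def IsModuleNatTrans {M : Type u₁} [Category.{v₁} M] {N : Type u₂} [Category.{v₂} N]
    {ρ : LeftModuleStr C M} {σ : LeftModuleStr C N}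
    (F G : ModuleFunctor ρ σ) (θ : F.F ⟶ G.F) : Prop :=
  ∀ (X : C) (m : M),
    θ.app ((ρ.act.obj X).obj m) ≫ (G.str X m).hom =
      (F.str X m).hom ≫ (σ.act.obj X).map (θ.app m)

/-- The category `Fun_C(M, N)` of `C`-module functors and module natural
transformations. -/
instance moduleFunctorCategory {M : Type u₁} [Category.{v₁} M] {N : Type u₂} [Category.{v₂} N]
    (ρ : LeftModuleStr C M) (σ : LeftModuleStr C N) :
    Category (ModuleFunctor ρ σ) where
  Hom F G := { θ : F.F ⟶ G.F // IsModuleNatTrans F G θ }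
  id F := ⟨𝟙 F.F, by intro X m; simp⟩
  comp {F G H} θ θ' := ⟨θ.1 ≫ θ'.1, by
    intro X m
    have h1 := θ.2 X m
    have h2 := θ'.2 X m
    simp only [NatTrans.comp_app, Category.assoc, Functor.map_comp]
    rw [h2, reassoc_of% h1]⟩
  id_comp f := by apply Subtype.ext; simp
  comp_id f := by apply Subtype.ext; simp
  assoc f g h := by apply Subtype.ext; simp

section ModuleEnds

variable {M : Type u₁} [Category.{v₁} M] {A : Type u₂} [Category.{v₂} A]

/-- `S(f, g)` for a functor `S : Mᵒᵖ × M ⥤ A`, contravariant in the first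
variable: here `f : m' ⟶ m` and `g : n ⟶ n'`. -/
abbrev smap (S : Mᵒᵖ × M ⥤ A) {m m' n n' : M} (f : m' ⟶ m) (g : n ⟶ n') :
    S.obj (op m, n) ⟶ S.obj (op m', n') :=
  S.map ((f.op, g) : ((op m, n) : Mᵒᵖ × M) ⟶ (op m', n'))

variable [RightRigidCategory C]

/-- A *pre-balancing* for a functor `S : Mᵒᵖ × M ⥤ A`, where `M` is a left
`C`-module category: a family of natural isomorphisms
`β^X_{m,n} : S(m, X ▷ n) ≅ S(Xᘁ ▷ m, n)`. -/
structure PreBalancing (ρ : LeftModuleStr C M) (S : Mᵒᵖ × M ⥤ A) where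
  iso : ∀ (X : C) (m n : M),
    S.obj (op m, (ρ.act.obj X).obj n) ≅ S.obj (op ((ρ.act.obj Xᘁ).obj m), n)
  natural : ∀ (X : C) {m m' n n' : M} (f : m' ⟶ m) (g : n ⟶ n'),
    smap S f ((ρ.act.obj X).map g) ≫ (iso X m' n').hom =
      (iso X m n).hom ≫ smap S ((ρ.act.obj Xᘁ).map f) g
  natural_tensor : ∀ {X X' : C} (f : X ⟶ X') (m n : M),
    smap S (𝟙 m) ((ρ.act.map f).app n) ≫ (iso X' m n).hom =
      (iso X m n).hom ≫ smap S ((ρ.act.map (fᘁ)).app m) (𝟙 n)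

variable (ρ : LeftModuleStr C M) (S : Mᵒᵖ × M ⥤ A)

/-- The canonical morphism `(Xᘁ ⊗ X) ▷ m ⟶ m` induced by the evaluation
(and the unit isomorphism). -/
def evActHom (X : C) (m : M) : (ρ.act.obj (Xᘁ ⊗ X)).obj m ⟶ m :=
  (ρ.act.map (ε_ X Xᘁ)).app m ≫ (ρ.unitIso m).hom

/-- The canonical morphism `m ⟶ (X ⊗ Xᘁ) ▷ m` induced by the coevaluation. -/
def coevActHom (X : C) (m : M) : m ⟶ (ρ.act.obj (X ⊗ Xᘁ)).obj m :=
  (ρ.unitIso m).inv ≫ (ρ.act.map (η_ X Xᘁ)).app m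

variable {ρ S}

/-- A *wedge* for `(S, β)` relative to a class `P` of objects of `C`:
a dinatural family `π` satisfying the module-end compatibility (equation (5)
of Section 3 of the paper) for every `X` in `P`.  Taking `P = fun _ => True`
gives module-end wedges; taking `P = fun _ => False` gives ordinary wedges
(for the ordinary end); an intermediate `P` corresponds to restricting the
module structure to a tensor subcategory. -/
structure ModuleEndCone (β : PreBalancing ρ S) (P : C → Prop) where
  pt : A
  π : ∀ m : M, pt ⟶ S.obj (op m, m)
  dinatural : ∀ {m n : M} (f : m ⟶ n),
    π m ≫ smap S (𝟙 m) f = π n ≫ smap S f (𝟙 n)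
  compat : ∀ (X : C), P X → ∀ (m : M),
    π m ≫ smap S (evActHom ρ X m) (𝟙 m) =
      π ((ρ.act.obj X).obj m) ≫ (β.iso X ((ρ.act.obj X).obj m) m).hom ≫
        smap S ((ρ.assoc Xᘁ X m).hom) (𝟙 m)

/-- Universality: `E` is a *module end* of `(S, β)` (relative to `P`). -/
def IsModuleEnd {β : PreBalancing ρ S} {P : C → Prop} (E : ModuleEndCone β P) : Prop :=
  ∀ (E' : ModuleEndCone β P), ∃! h : E'.pt ⟶ E.pt, ∀ m : M, h ≫ E.π m = E'.π m

/-- A *cowedge* for `(S, β)` relative to `P` (for module coends,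
equation (6) of the paper). -/
structure ModuleCoendCocone (β : PreBalancing ρ S) (P : C → Prop) where
  pt : A
  ι : ∀ m : M, S.obj (op m, m) ⟶ pt
  dinatural : ∀ {m n : M} (f : m ⟶ n),
    smap S f (𝟙 m) ≫ ι m = smap S (𝟙 n) f ≫ ι n
  compat : ∀ (X : C), P X → ∀ (m : M),
    ι m = smap S (𝟙 m) (coevActHom ρ X m ≫ (ρ.assoc X Xᘁ m).hom) ≫
        (β.iso X m ((ρ.act.obj Xᘁ).obj m)).hom ≫ ι ((ρ.act.obj Xᘁ).obj m)

/-- Universality: `E` is a *module coend* of `(S, β)` (relative to `P`). -/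
def IsModuleCoend {β : PreBalancing ρ S} {P : C → Prop} (E : ModuleCoendCocone β P) : Prop :=
  ∀ (E' : ModuleCoendCocone β P), ∃! h : E.pt ⟶ E'.pt, ∀ m : M, E.ι m ≫ h = E'.ι m

end ModuleEnds

section InternalHom

variable {M : Type u₁} [Category.{v₁} M]

/-- Internal Hom data for a left `C`-module category: a bifunctor
`H : Mᵒᵖ × M ⥤ C` together with bijections
`(X ⟶ uhom(m,n)) ≃ (X ▷ m ⟶ n)` natural in all three variables. -/
structure InternalHom (ρ : LeftModuleStr C M) where
  H : Mᵒᵖ × M ⥤ C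
  repr : ∀ (X : C) (m n : M), (X ⟶ H.obj (op m, n)) ≃ ((ρ.act.obj X).obj m ⟶ n)
  repr_natural : ∀ {X X' : C} (f : X ⟶ X') (m n : M) (u : X' ⟶ H.obj (op m, n)),
    repr X m n (f ≫ u) = (ρ.act.map f).app m ≫ repr X' m n u
  repr_natural_m : ∀ (X : C) {m m' : M} (f : m' ⟶ m) (n : M)
      (u : X ⟶ H.obj (op m, n)),
    repr X m' n (u ≫ smap H f (𝟙 n)) = (ρ.act.obj X).map f ≫ repr X m n u
  repr_natural_n : ∀ (X : C) (m : M) {n n' : M} (g : n ⟶ n')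
      (u : X ⟶ H.obj (op m, n)),
    repr X m n' (u ≫ smap H (𝟙 m) g) = repr X m n u ≫ g

variable [RightRigidCategory C]

/-- Internal Hom data for the right `C`-module category `Mᵒᵖ` opposite to a left
`C`-module category `M` (with action `m̄ ◁ X = (Xᘁ ▷ m)‾`): a bifunctor
`H' : M × Mᵒᵖ ⥤ C` (with `H'.obj (m, op n) = uhom_{Mᵒᵖ}(m̄, n̄)`) together with
bijections `(X ⟶ uhom_{Mᵒᵖ}(m̄, n̄)) ≃ (m̄ ◁ X ⟶ n̄) = (n ⟶ Xᘁ ▷ m)`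
natural in all three variables. -/
structure OpInternalHom (ρ : LeftModuleStr C M) where
  H : M × Mᵒᵖ ⥤ C
  repr : ∀ (X : C) (m n : M), (X ⟶ H.obj (m, op n)) ≃ (n ⟶ (ρ.act.obj Xᘁ).obj m)
  repr_natural : ∀ {X X' : C} (f : X ⟶ X') (m n : M) (u : X' ⟶ H.obj (m, op n)),
    repr X m n (f ≫ u) = repr X' m n u ≫ (ρ.act.map (fᘁ)).app m
  repr_natural_m : ∀ (X : C) {m m' : M} (f : m ⟶ m') (n : M)
      (u : X ⟶ H.obj (m, op n)),
    repr X m' n (u ≫ H.map ((f, 𝟙 (op n)) : ((m, op n) : M × Mᵒᵖ) ⟶ (m', op n))) =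
      repr X m n u ≫ (ρ.act.obj Xᘁ).map f
  repr_natural_n : ∀ (X : C) (m : M) {n n' : M} (g : n' ⟶ n)
      (u : X ⟶ H.obj (m, op n)),
    repr X m n' (u ≫ H.map ((𝟙 m, g.op) : ((m, op n) : M × Mᵒᵖ) ⟶ (m, op n'))) =
      g ≫ repr X m n u

end InternalHom


/-! ### Algebras and modules internal to `C` -/

section Algebra

variable {C : Type u} [Category.{v} C] [MonoidalCategory C]

/-- A right module in `C` over an algebra `A` in `C`. -/
structure MRightMod (A : Mon C) where
  X : C
  act : X ⊗ A.X ⟶ X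
  act_one : (X ◁ MonObj.one (X := A.X)) ≫ act = (ρ_ X).hom
  act_mul : (α_ X A.X A.X).hom ≫ (X ◁ MonObj.mul (X := A.X)) ≫ act = (act ▷ A.X) ≫ act

variable [LeftRigidCategory C]

/-- The canonical left `A`-action `λ_{ᘁM} : A ⊗ ᘁM ⟶ ᘁM` on the left dual of a
right `A`-module `M` (equation (14) of the paper). -/
def dualAct (A : Mon C) (M : MRightMod A) : A.X ⊗ (ᘁ(M.X)) ⟶ (ᘁ(M.X)) :=
  (λ_ (A.X ⊗ (ᘁ(M.X)))).inv ≫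
    ((η_ (ᘁ(M.X)) M.X) ▷ (A.X ⊗ (ᘁ(M.X)))) ≫
      (α_ (ᘁ(M.X)) M.X (A.X ⊗ (ᘁ(M.X)))).hom ≫
        ((ᘁ(M.X)) ◁ ((α_ M.X A.X (ᘁ(M.X))).inv ≫ (M.act ▷ (ᘁ(M.X))) ≫
          (ε_ (ᘁ(M.X)) M.X))) ≫
          (ρ_ (ᘁ(M.X))).hom

/-- Morphisms of right `A`-modules. -/
def IsRightModHom {A : Mon C} (M N : MRightMod A) (f : M.X ⟶ N.X) : Prop :=
  M.act ≫ f = (f ▷ A.X) ≫ N.act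

/-- The category of right `A`-modules in `C`. -/
instance mRightModCategory (A : Mon C) : Category (MRightMod A) where
  Hom M N := { f : M.X ⟶ N.X // IsRightModHom M N f }
  id M := ⟨𝟙 M.X, by simp [IsRightModHom]⟩
  comp {M N O} f g := ⟨f.1 ≫ g.1, by
    have hf := f.2
    have hg := g.2
    simp only [IsRightModHom] at *
    rw [← Category.assoc, hf, Category.assoc, hg, ← comp_whiskerRight_assoc]⟩
  id_comp f := by apply Subtype.ext; simp
  comp_id f := by apply Subtype.ext; simp
  assoc f g h := by apply Subtype.ext; simp

end Algebra

section S3Aux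

variable {D : Type u₃} [Category.{v₃} D] [MonoidalCategory D]

/-- Hom-set equivalence from a coequalizer-style universal property. -/
noncomputable def coeqHomEquiv {Dom W T : D} (a b : Dom ⟶ W) (pi : W ⟶ T)
    (hcoeq : a ≫ pi = b ≫ pi)
    (huniv : ∀ {Z : D} (h : W ⟶ Z), a ≫ h = b ≫ h → ∃! g : T ⟶ Z, pi ≫ g = h)
    (Z : D) : (T ⟶ Z) ≃ {v : W ⟶ Z // a ≫ v = b ≫ v} where
  toFun g := ⟨pi ≫ g, by rw [← Category.assoc, ← Category.assoc, hcoeq]⟩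
  invFun v := (huniv v.1 v.2).choose
  left_inv g := by
    have h := (huniv (pi ≫ g) (by rw [← Category.assoc, ← Category.assoc, hcoeq])).choose_spec
    exact (h.2 g rfl).symm
  right_inv v := Subtype.ext (huniv v.1 v.2).choose_spec.1

theorem tRHE_leftNaturality {W W' Y Y' Z : D} [ExactPairing Y Y'] (p : W ⟶ W')
    (k : W' ⊗ Y ⟶ Z) :
    tensorRightHomEquiv W Y Y' Z ((p ▷ Y) ≫ k) = p ≫ tensorRightHomEquiv W' Y Y' Z k := by
  apply (tensorRightHomEquiv W Y Y' Z).symm.injective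
  rw [Equiv.symm_apply_apply, tensorRightHomEquiv_symm_naturality, Equiv.symm_apply_apply]

theorem dualAct_comp_evaluation [LeftRigidCategory D] (A : Mon D) (P : MRightMod A) :
    (P.X ◁ dualAct A P) ≫ ε_ (ᘁ(P.X) : D) P.X =
      (α_ P.X A.X (ᘁ(P.X) : D)).inv ≫ (P.act ▷ (ᘁ(P.X) : D)) ≫ ε_ (ᘁ(P.X) : D) P.X :=
  calc
    _ = 𝟙 _ ⊗≫ P.X ◁ η_ (ᘁ(P.X) : D) P.X ▷ (A.X ⊗ (ᘁ(P.X) : D)) ⊗≫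
        ((P.X ⊗ (ᘁ(P.X) : D)) ◁
            ((α_ P.X A.X (ᘁ(P.X) : D)).inv ≫ (P.act ▷ (ᘁ(P.X) : D)) ≫ ε_ (ᘁ(P.X) : D) P.X)
          ≫ ε_ (ᘁ(P.X) : D) P.X ▷ (𝟙_ D)) ⊗≫ 𝟙 _ := by
      dsimp only [dualAct]; monoidal
    _ = 𝟙 _ ⊗≫ (P.X ◁ η_ (ᘁ(P.X) : D) P.X ⊗≫ ε_ (ᘁ(P.X) : D) P.X ▷ P.X) ▷ (A.X ⊗ (ᘁ(P.X) : D)) ⊗≫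
        ((α_ P.X A.X (ᘁ(P.X) : D)).inv ≫ (P.act ▷ (ᘁ(P.X) : D)) ≫ ε_ (ᘁ(P.X) : D) P.X) := by
      rw [whisker_exchange]; monoidal
    _ = _ := by rw [ExactPairing.coevaluation_evaluation'']; monoidal

end S3Aux
section S3Aux2

variable {D : Type u₃} [Category.{v₃} D] [MonoidalCategory D]

theorem tRHE_mateNaturality [RightRigidCategory D] {W X X' Z : D} (f : X ⟶ X')
    (k : W ⊗ X' ⟶ Z) :
    tensorRightHomEquiv W X (Xᘁ) Z ((W ◁ f) ≫ k) =
      tensorRightHomEquiv W X' (X'ᘁ) Z k ≫ (Z ◁ (fᘁ)) := by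
  symm
  calc tensorRightHomEquiv W X' (X'ᘁ) Z k ≫ (Z ◁ (fᘁ))
      = 𝟙 _ ⊗≫ W ◁ η_ X' (X'ᘁ) ⊗≫ (k ▷ (X'ᘁ) ≫ Z ◁ (fᘁ)) ⊗≫ 𝟙 _ := by
        dsimp [tensorRightHomEquiv]; monoidal
    _ = 𝟙 _ ⊗≫ W ◁ (η_ X' (X'ᘁ) ≫ X' ◁ (fᘁ)) ⊗≫ k ▷ (Xᘁ) ⊗≫ 𝟙 _ := by
        rw [← whisker_exchange]; monoidal
    _ = 𝟙 _ ⊗≫ W ◁ (η_ X (Xᘁ) ≫ f ▷ (Xᘁ)) ⊗≫ k ▷ (Xᘁ) ⊗≫ 𝟙 _ := by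
        rw [coevaluation_comp_rightAdjointMate]
    _ = tensorRightHomEquiv W X (Xᘁ) Z ((W ◁ f) ≫ k) := by
        dsimp [tensorRightHomEquiv]; monoidal

end S3Aux2
section S3PartI

variable {D : Type u₃} [Category.{v₃} D] [MonoidalCategory D] [RigidCategory D]
variable (A : Mon D) (M N : MRightMod A) (X : D)

/-- Currying away a left dual `ᘁN`. -/
noncomputable def PhiI : (X ⊗ M.X ⟶ N.X) ≃ (X ⊗ (M.X ⊗ (ᘁ(N.X) : D)) ⟶ 𝟙_ D) :=
  (Iso.homCongr (Iso.refl _) (λ_ N.X).symm).trans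
    (((tensorRightHomEquiv (X ⊗ M.X) (ᘁ(N.X) : D) N.X (𝟙_ D)).symm).trans
      (Iso.homCongr (α_ X M.X (ᘁ(N.X) : D)) (Iso.refl _)))

/-- Currying away a left dual `ᘁN`, on `(X ⊗ M) ⊗ A`. -/
noncomputable def ThetaI : ((X ⊗ M.X) ⊗ A.X ⟶ N.X) ≃
    (X ⊗ (M.X ⊗ (A.X ⊗ (ᘁ(N.X) : D))) ⟶ 𝟙_ D) :=
  (Iso.homCongr (Iso.refl _) (λ_ N.X).symm).trans
    (((tensorRightHomEquiv ((X ⊗ M.X) ⊗ A.X) (ᘁ(N.X) : D) N.X (𝟙_ D)).symm).trans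
      (Iso.homCongr ((α_ (X ⊗ M.X) A.X (ᘁ(N.X) : D)) ≪≫ (α_ X M.X (A.X ⊗ (ᘁ(N.X) : D))))
        (Iso.refl _)))

theorem EqAI (h : X ⊗ M.X ⟶ N.X) :
    ThetaI A M N X ((α_ X M.X A.X).hom ≫ (X ◁ M.act) ≫ h) =
      (X ◁ (α_ M.X A.X (ᘁ(N.X) : D)).inv) ≫ (X ◁ (M.act ▷ (ᘁ(N.X) : D))) ≫ PhiI A M N X h := by
  dsimp [ThetaI, PhiI, tensorRightHomEquiv, Iso.homCongr, Equiv.coe_fn_mk]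
  monoidal

theorem EqBI (h : X ⊗ M.X ⟶ N.X) :
    ThetaI A M N X ((h ▷ A.X) ≫ N.act) =
      (X ◁ (M.X ◁ dualAct A N)) ≫ PhiI A M N X h :=
  calc ThetaI A M N X ((h ▷ A.X) ≫ N.act)
      = 𝟙 _ ⊗≫ h ▷ (A.X ⊗ (ᘁ(N.X) : D)) ⊗≫
          ((α_ N.X A.X (ᘁ(N.X) : D)).inv ≫ (N.act ▷ (ᘁ(N.X) : D)) ≫ ε_ (ᘁ(N.X) : D) N.X) ⊗≫
          𝟙 _ := by
        dsimp [ThetaI, tensorRightHomEquiv, Iso.homCongr, Equiv.coe_fn_mk]; monoidal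
    _ = 𝟙 _ ⊗≫ h ▷ (A.X ⊗ (ᘁ(N.X) : D)) ⊗≫
          (N.X ◁ dualAct A N ≫ ε_ (ᘁ(N.X) : D) N.X) ⊗≫ 𝟙 _ := by
        rw [dualAct_comp_evaluation]
    _ = 𝟙 _ ⊗≫ (((X ⊗ M.X : D) ◁ dualAct A N) ≫ h ▷ (ᘁ(N.X) : D)) ⊗≫
          ε_ (ᘁ(N.X) : D) N.X ⊗≫ 𝟙 _ := by
        rw [whisker_exchange]; monoidal
    _ = (X ◁ (M.X ◁ dualAct A N)) ≫ PhiI A M N X h := by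
        dsimp [PhiI, tensorRightHomEquiv, Iso.homCongr, Equiv.coe_fn_mk]; monoidal

theorem hiffI (h : X ⊗ M.X ⟶ N.X) :
    ((α_ X M.X A.X).hom ≫ (X ◁ M.act) ≫ h = (h ▷ A.X) ≫ N.act) ↔
      ((X ◁ (α_ M.X A.X (ᘁ(N.X) : D)).inv) ≫ (X ◁ (M.act ▷ (ᘁ(N.X) : D))) ≫ PhiI A M N X h =
        (X ◁ (M.X ◁ dualAct A N)) ≫ PhiI A M N X h) := by
  rw [← EqAI, ← EqBI]
  exact (Equiv.apply_eq_iff_eq (ThetaI A M N X)).symm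

end S3PartI
section S3PartIAssemble

variable {D : Type u₃} [Category.{v₃} D] [MonoidalCategory D] [RigidCategory D]
variable (A : Mon D) (M N : MRightMod A)

theorem PhiI_symm_nat {X X' : D} (f : X ⟶ X') (w : X' ⊗ (M.X ⊗ (ᘁ(N.X) : D)) ⟶ 𝟙_ D) :
    (PhiI A M N X).symm ((f ▷ (M.X ⊗ (ᘁ(N.X) : D))) ≫ w) =
      (f ▷ M.X) ≫ (PhiI A M N X').symm w := by
  dsimp [PhiI, Iso.homCongr]
  rw [Category.comp_id, Category.comp_id, Category.id_comp, Category.id_comp,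
    ← MonoidalCategory.associator_naturality_left_assoc, tRHE_leftNaturality,
    Category.assoc]

variable (X : D)
variable (T : D) (piT : M.X ⊗ (ᘁ(N.X) : D) ⟶ T)
    (hcoeq : ((α_ M.X A.X (ᘁ(N.X) : D)).inv ≫ (M.act ▷ (ᘁ(N.X) : D))) ≫ piT =
      (M.X ◁ dualAct A N) ≫ piT)
    (huniv : ∀ {Z : D} (h : M.X ⊗ (ᘁ(N.X) : D) ⟶ Z),
      ((α_ M.X A.X (ᘁ(N.X) : D)).inv ≫ (M.act ▷ (ᘁ(N.X) : D))) ≫ h =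
        (M.X ◁ dualAct A N) ≫ h → ∃! g : T ⟶ Z, piT ≫ g = h)

/-- The internal-Hom representing equivalence for the left module category `C_A`. -/
noncomputable def eI : (X ⟶ (Tᘁ)) ≃
    { h : X ⊗ M.X ⟶ N.X //
      (α_ X M.X A.X).hom ≫ (X ◁ M.act) ≫ h = (h ▷ A.X) ≫ N.act } :=
  ((Iso.homCongr (Iso.refl X) (λ_ (Tᘁ)).symm).trans
      (tensorRightHomEquiv X T (Tᘁ) (𝟙_ D)).symm).trans
    ((tensorLeftHomEquiv T (ᘁX : D) X (𝟙_ D)).trans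
      ((coeqHomEquiv _ _ piT hcoeq huniv ((ᘁX : D) ⊗ 𝟙_ D)).trans
        ((Equiv.subtypeEquiv
            (q := fun g => (X ◁ (α_ M.X A.X (ᘁ(N.X) : D)).inv) ≫
                (X ◁ (M.act ▷ (ᘁ(N.X) : D))) ≫ g = (X ◁ (M.X ◁ dualAct A N)) ≫ g)
            (tensorLeftHomEquiv (M.X ⊗ (ᘁ(N.X) : D)) (ᘁX : D) X (𝟙_ D)).symm
            (fun v => by
              beta_reduce
              have n1 : ∀ (c : M.X ⊗ (A.X ⊗ (ᘁ(N.X) : D)) ⟶ M.X ⊗ (ᘁ(N.X) : D)),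
                  (X ◁ c) ≫
                      (tensorLeftHomEquiv (M.X ⊗ (ᘁ(N.X) : D)) (ᘁX : D) X (𝟙_ D)).symm v =
                    (tensorLeftHomEquiv (M.X ⊗ (A.X ⊗ (ᘁ(N.X) : D))) (ᘁX : D) X (𝟙_ D)).symm
                      (c ≫ v) :=
                fun c => (tensorLeftHomEquiv_symm_naturality c v).symm
              rw [← MonoidalCategory.whiskerLeft_comp_assoc, n1, n1]
              exact (Equiv.apply_eq_iff_eq _).symm)).trans
          (Equiv.subtypeEquiv (PhiI A M N X).symm
            (fun g => by
              have := hiffI A M N X ((PhiI A M N X).symm g)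
              rw [Equiv.apply_symm_apply] at this
              exact this.symm)))))

theorem eI_apply (u : X ⟶ (Tᘁ)) :
    (eI A M N X T piT hcoeq huniv u).1 =
      (PhiI A M N X).symm ((X ◁ piT) ≫
        (tensorRightHomEquiv X T (Tᘁ) (𝟙_ D)).symm (u ≫ (λ_ (Tᘁ)).inv)) := by
  dsimp [eI, coeqHomEquiv, Iso.homCongr, Equiv.coe_fn_mk, Equiv.subtypeEquiv, Equiv.trans_apply]
  rw [Category.id_comp, tensorLeftHomEquiv_symm_naturality, Equiv.symm_apply_apply]

end S3PartIAssemble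
section S3PartINat

variable {D : Type u₃} [Category.{v₃} D] [MonoidalCategory D] [RigidCategory D]
variable (A : Mon D) (M N : MRightMod A)
variable (T : D) (piT : M.X ⊗ (ᘁ(N.X) : D) ⟶ T)
    (hcoeq : ((α_ M.X A.X (ᘁ(N.X) : D)).inv ≫ (M.act ▷ (ᘁ(N.X) : D))) ≫ piT =
      (M.X ◁ dualAct A N) ≫ piT)
    (huniv : ∀ {Z : D} (h : M.X ⊗ (ᘁ(N.X) : D) ⟶ Z),
      ((α_ M.X A.X (ᘁ(N.X) : D)).inv ≫ (M.act ▷ (ᘁ(N.X) : D))) ≫ h =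
        (M.X ◁ dualAct A N) ≫ h → ∃! g : T ⟶ Z, piT ≫ g = h)

theorem eI_nat {X X' : D} (f : X ⟶ X') (u : X' ⟶ (Tᘁ)) :
    (eI A M N X T piT hcoeq huniv (f ≫ u)).1 =
      (f ▷ M.X) ≫ (eI A M N X' T piT hcoeq huniv u).1 := by
  rw [eI_apply, eI_apply, Category.assoc, tensorRightHomEquiv_symm_naturality,
    whisker_exchange_assoc, PhiI_symm_nat]

end S3PartINat
section S3PartII

variable {D : Type u₃} [Category.{v₃} D] [MonoidalCategory D] [RigidCategory D]
variable (A : Mon D) (M N : MRightMod A) (X : D)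

/-- Currying away a left dual `ᘁM` on the source side. -/
noncomputable def ThetaII : (N.X ⊗ A.X ⟶ (Xᘁ : D) ⊗ M.X) ≃
    (N.X ⊗ (A.X ⊗ (ᘁ(M.X) : D)) ⟶ (Xᘁ : D)) :=
  ((tensorRightHomEquiv (N.X ⊗ A.X) (ᘁ(M.X) : D) M.X (Xᘁ : D)).symm).trans
    (Iso.homCongr (α_ N.X A.X (ᘁ(M.X) : D)) (Iso.refl _))

/-- The final re-currying equivalence for part (ii). -/
noncomputable def PsiII : (N.X ⊗ (ᘁ(M.X) : D) ⟶ 𝟙_ D ⊗ (Xᘁ : D)) ≃ (N.X ⟶ (Xᘁ : D) ⊗ M.X) :=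
  (Iso.homCongr (Iso.refl _) (λ_ (Xᘁ : D))).trans
    (tensorRightHomEquiv N.X (ᘁ(M.X) : D) M.X (Xᘁ : D))

theorem EqAII (h : N.X ⟶ (Xᘁ : D) ⊗ M.X) :
    ThetaII A M N X (N.act ≫ h) =
      ((α_ N.X A.X (ᘁ(M.X) : D)).inv ≫ (N.act ▷ (ᘁ(M.X) : D))) ≫
        (tensorRightHomEquiv N.X (ᘁ(M.X) : D) M.X (Xᘁ : D)).symm h := by
  dsimp [ThetaII, Iso.homCongr]
  rw [Category.comp_id, tensorRightHomEquiv_symm_naturality, Category.assoc]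

theorem EqBII (h : N.X ⟶ (Xᘁ : D) ⊗ M.X) :
    ThetaII A M N X ((h ▷ A.X) ≫ (α_ (Xᘁ : D) M.X A.X).hom ≫ ((Xᘁ : D) ◁ M.act)) =
      (N.X ◁ dualAct A M) ≫ (tensorRightHomEquiv N.X (ᘁ(M.X) : D) M.X (Xᘁ : D)).symm h :=
  calc ThetaII A M N X ((h ▷ A.X) ≫ (α_ (Xᘁ : D) M.X A.X).hom ≫ ((Xᘁ : D) ◁ M.act))
      = 𝟙 _ ⊗≫ h ▷ (A.X ⊗ (ᘁ(M.X) : D)) ⊗≫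
          (Xᘁ : D) ◁ ((α_ M.X A.X (ᘁ(M.X) : D)).inv ≫ (M.act ▷ (ᘁ(M.X) : D)) ≫
            ε_ (ᘁ(M.X) : D) M.X) ⊗≫ 𝟙 _ := by
        dsimp [ThetaII, tensorRightHomEquiv, Iso.homCongr, Equiv.coe_fn_mk]; monoidal
    _ = 𝟙 _ ⊗≫ h ▷ (A.X ⊗ (ᘁ(M.X) : D)) ⊗≫
          (Xᘁ : D) ◁ (M.X ◁ dualAct A M ≫ ε_ (ᘁ(M.X) : D) M.X) ⊗≫ 𝟙 _ := by
        rw [dualAct_comp_evaluation]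
    _ = 𝟙 _ ⊗≫ (N.X ◁ dualAct A M ≫ h ▷ (ᘁ(M.X) : D)) ⊗≫
          (Xᘁ : D) ◁ ε_ (ᘁ(M.X) : D) M.X ⊗≫ 𝟙 _ := by
        rw [whisker_exchange]; monoidal
    _ = (N.X ◁ dualAct A M) ≫ (tensorRightHomEquiv N.X (ᘁ(M.X) : D) M.X (Xᘁ : D)).symm h := by
        dsimp [tensorRightHomEquiv]; monoidal

theorem hiffII (h : N.X ⟶ (Xᘁ : D) ⊗ M.X) :
    (((α_ N.X A.X (ᘁ(M.X) : D)).inv ≫ (N.act ▷ (ᘁ(M.X) : D))) ≫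
          (tensorRightHomEquiv N.X (ᘁ(M.X) : D) M.X (Xᘁ : D)).symm h =
        (N.X ◁ dualAct A M) ≫ (tensorRightHomEquiv N.X (ᘁ(M.X) : D) M.X (Xᘁ : D)).symm h) ↔
      (N.act ≫ h = (h ▷ A.X) ≫ (α_ (Xᘁ : D) M.X A.X).hom ≫ ((Xᘁ : D) ◁ M.act)) := by
  rw [← EqAII, ← EqBII]
  exact Equiv.apply_eq_iff_eq (ThetaII A M N X)

end S3PartII
section S3PartIIAssemble

variable {D : Type u₃} [Category.{v₃} D] [MonoidalCategory D] [RigidCategory D]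
variable (A : Mon D) (M N : MRightMod A)

theorem PsiII_nat {X X' : D} (f : X ⟶ X') (t : N.X ⊗ (ᘁ(M.X) : D) ⟶ 𝟙_ D ⊗ (X'ᘁ : D)) :
    PsiII A M N X (t ≫ (𝟙_ D ◁ (fᘁ))) = PsiII A M N X' t ≫ ((fᘁ) ▷ M.X) := by
  dsimp [PsiII, Iso.homCongr]
  rw [Category.id_comp, Category.id_comp, Category.assoc,
    MonoidalCategory.leftUnitor_naturality, ← Category.assoc,
    tensorRightHomEquiv_naturality]

variable (X : D)
variable (T₂ : D) (piT₂ : N.X ⊗ (ᘁ(M.X) : D) ⟶ T₂)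
    (hcoeq₂ : ((α_ N.X A.X (ᘁ(M.X) : D)).inv ≫ (N.act ▷ (ᘁ(M.X) : D))) ≫ piT₂ =
      (N.X ◁ dualAct A M) ≫ piT₂)
    (huniv₂ : ∀ {Z : D} (h : N.X ⊗ (ᘁ(M.X) : D) ⟶ Z),
      ((α_ N.X A.X (ᘁ(M.X) : D)).inv ≫ (N.act ▷ (ᘁ(M.X) : D))) ≫ h =
        (N.X ◁ dualAct A M) ≫ h → ∃! g : T₂ ⟶ Z, piT₂ ≫ g = h)

/-- The internal-Hom representing equivalence for the opposite module category. -/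
noncomputable def eII : (X ⟶ (ᘁT₂ : D)) ≃
    { h : N.X ⟶ (Xᘁ) ⊗ M.X //
      N.act ≫ h = (h ▷ A.X) ≫ (α_ (Xᘁ) M.X A.X).hom ≫ ((Xᘁ) ◁ M.act) } :=
  ((Iso.homCongr (Iso.refl X) (ρ_ (ᘁT₂ : D)).symm).trans
      (tensorLeftHomEquiv X (ᘁT₂ : D) T₂ (𝟙_ D)).symm).trans
    ((tensorRightHomEquiv T₂ X (Xᘁ) (𝟙_ D)).trans
      ((coeqHomEquiv _ _ piT₂ hcoeq₂ huniv₂ (𝟙_ D ⊗ (Xᘁ : D))).trans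
        (Equiv.subtypeEquiv
          (q := fun h => N.act ≫ h = (h ▷ A.X) ≫ (α_ (Xᘁ) M.X A.X).hom ≫ ((Xᘁ) ◁ M.act))
          (PsiII A M N X)
          (fun v => by
            beta_reduce
            have h1 := hiffII A M N X (PsiII A M N X v)
            have h2 : (tensorRightHomEquiv N.X (ᘁ(M.X) : D) M.X (Xᘁ)).symm
                (PsiII A M N X v) = v ≫ (λ_ (Xᘁ : D)).hom := by
              dsimp [PsiII, Iso.homCongr]
              rw [Category.id_comp, Equiv.symm_apply_apply]
            rw [h2] at h1
            rw [← h1]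
            conv_rhs => rw [← Category.assoc, ← Category.assoc]
            exact (cancel_mono (λ_ (Xᘁ : D)).hom).symm))))

theorem eII_apply (u : X ⟶ (ᘁT₂ : D)) :
    (eII A M N X T₂ piT₂ hcoeq₂ huniv₂ u).1 =
      PsiII A M N X (tensorRightHomEquiv (N.X ⊗ (ᘁ(M.X) : D)) X (Xᘁ) (𝟙_ D)
        ((piT₂ ▷ X) ≫
          (tensorLeftHomEquiv X (ᘁT₂ : D) T₂ (𝟙_ D)).symm (u ≫ (ρ_ (ᘁT₂ : D)).inv))) := by
  dsimp [eII, coeqHomEquiv, Iso.homCongr, Equiv.coe_fn_mk, Equiv.subtypeEquiv, Equiv.trans_apply]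
  rw [Category.id_comp, tRHE_leftNaturality]

theorem eII_nat {X X' : D} (f : X ⟶ X') (u : X' ⟶ (ᘁT₂ : D)) :
    (eII A M N X T₂ piT₂ hcoeq₂ huniv₂ (f ≫ u)).1 =
      (eII A M N X' T₂ piT₂ hcoeq₂ huniv₂ u).1 ≫ ((fᘁ) ▷ M.X) := by
  rw [eII_apply, eII_apply, Category.assoc, tensorLeftHomEquiv_symm_naturality,
    ← whisker_exchange_assoc, tRHE_mateNaturality, PsiII_nat]

end S3PartIIAssemble

/-!
## STATEMENT 3

(Proposition 2.9 of the paper.)  For an algebra `A` in `C` and right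
`A`-modules `M, N`, the internal Hom of the left `C`-module category `C_A`
is `uhom_{C_A}(M, N) = (M ⊗_A ᘁN)ᘁ`, and the internal Hom of the opposite
(right) module category is `uhom_{(C_A)ᵒᵖ}(M, N) = ᘁ(N ⊗_A ᘁM)`.

The relative tensor products `M ⊗_A ᘁN` and `N ⊗_A ᘁM` are hypothesised via
their universal (coequalizer) property; the conclusion states that the objects
`(M ⊗_A ᘁN)ᘁ` and `ᘁ(N ⊗_A ᘁM)` represent the functors
`X ↦ Hom_A(X ▷ M, N)` and `X ↦ Hom_A(N, Xᘁ ▷ M) = Hom_{(C_A)ᵒᵖ}(M̄ ◁ X, N̄)`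
respectively, naturally in `X`.
-/

variable {k : Type w} [Field k]

theorem statement3
    {C : Type u} [Category.{v} C] [Abelian C] [CategoryTheory.Linear k C]
    [MonoidalCategory C] [MonoidalPreadditive C] [MonoidalLinear k C]
    [RigidCategory C] [Simple (𝟙_ C)]
    (A : Mon C) (M N : MRightMod A)
    -- the relative tensor product `T = M ⊗_A ᘁN` (a coequalizer):
    (T : C) (piT : M.X ⊗ (ᘁ(N.X)) ⟶ T)
    (hcoeq : (α_ M.X A.X (ᘁ(N.X))).inv ≫ (M.act ▷ (ᘁ(N.X))) ≫ piT =
      (M.X ◁ dualAct A N) ≫ piT)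
    (huniv : ∀ {Z : C} (h : M.X ⊗ (ᘁ(N.X)) ⟶ Z),
      ((α_ M.X A.X (ᘁ(N.X))).inv ≫ (M.act ▷ (ᘁ(N.X))) ≫ h =
        (M.X ◁ dualAct A N) ≫ h) → ∃! g : T ⟶ Z, piT ≫ g = h)
    -- the relative tensor product `T₂ = N ⊗_A ᘁM`:
    (T₂ : C) (piT₂ : N.X ⊗ (ᘁ(M.X)) ⟶ T₂)
    (hcoeq₂ : (α_ N.X A.X (ᘁ(M.X))).inv ≫ (N.act ▷ (ᘁ(M.X))) ≫ piT₂ =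
      (N.X ◁ dualAct A M) ≫ piT₂)
    (huniv₂ : ∀ {Z : C} (h : N.X ⊗ (ᘁ(M.X)) ⟶ Z),
      ((α_ N.X A.X (ᘁ(M.X))).inv ≫ (N.act ▷ (ᘁ(M.X))) ≫ h =
        (N.X ◁ dualAct A M) ≫ h) → ∃! g : T₂ ⟶ Z, piT₂ ≫ g = h) :
    -- (i) `Tᘁ = (M ⊗_A ᘁN)ᘁ` represents `X ↦ Hom_A(X ▷ M, N)`, naturally:
    (∃ e : ∀ X : C,
        (X ⟶ (Tᘁ)) ≃
          { h : X ⊗ M.X ⟶ N.X //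
            (α_ X M.X A.X).hom ≫ (X ◁ M.act) ≫ h = (h ▷ A.X) ≫ N.act },
      ∀ {X X' : C} (f : X ⟶ X') (u : X' ⟶ (Tᘁ)),
        ((e X) (f ≫ u)).1 = (f ▷ M.X) ≫ ((e X') u).1) ∧
    -- (ii) `ᘁT₂ = ᘁ(N ⊗_A ᘁM)` represents `X ↦ Hom_A(N, Xᘁ ▷ M)`, naturally:
    (∃ e₂ : ∀ X : C,
        (X ⟶ (ᘁT₂)) ≃
          { h : N.X ⟶ (Xᘁ) ⊗ M.X //
            N.act ≫ h =
              (h ▷ A.X) ≫ (α_ (Xᘁ) M.X A.X).hom ≫ ((Xᘁ) ◁ M.act) },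
      ∀ {X X' : C} (f : X ⟶ X') (u : X' ⟶ (ᘁT₂)),
        ((e₂ X) (f ≫ u)).1 = ((e₂ X') u).1 ≫ ((fᘁ) ▷ M.X)) := by
  have hcI : ((α_ M.X A.X (ᘁ(N.X) : C)).inv ≫ (M.act ▷ (ᘁ(N.X) : C))) ≫ piT =
      (M.X ◁ dualAct A N) ≫ piT := by rw [Category.assoc]; exact hcoeq
  have huI : ∀ {Z : C} (h : M.X ⊗ (ᘁ(N.X) : C) ⟶ Z),
      ((α_ M.X A.X (ᘁ(N.X) : C)).inv ≫ (M.act ▷ (ᘁ(N.X) : C))) ≫ h =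
        (M.X ◁ dualAct A N) ≫ h → ∃! g : T ⟶ Z, piT ≫ g = h :=
    fun h hh => huniv h (by rw [← Category.assoc]; exact hh)
  have hcII : ((α_ N.X A.X (ᘁ(M.X) : C)).inv ≫ (N.act ▷ (ᘁ(M.X) : C))) ≫ piT₂ =
      (N.X ◁ dualAct A M) ≫ piT₂ := by rw [Category.assoc]; exact hcoeq₂
  have huII : ∀ {Z : C} (h : N.X ⊗ (ᘁ(M.X) : C) ⟶ Z),
      ((α_ N.X A.X (ᘁ(M.X) : C)).inv ≫ (N.act ▷ (ᘁ(M.X) : C))) ≫ h =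
        (N.X ◁ dualAct A M) ≫ h → ∃! g : T₂ ⟶ Z, piT₂ ≫ g = h :=
    fun h hh => huniv₂ h (by rw [← Category.assoc]; exact hh)
  exact ⟨⟨fun X => eI A M N X T piT hcI huI,
          fun {X X'} f u => eI_nat A M N T piT hcI huI f u⟩,
         ⟨fun X => eII A M N X T₂ piT₂ hcII huII,
          fun {X X'} f u => eII_nat A M N T₂ piT₂ hcII huII f u⟩⟩
end TensorModuleEnd
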